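/- Let H be a complex Hilbert space and A, B bounded linear operators on H. If there exists λ > 0 such that ‖A* x‖ ≤ λ ‖B* x‖ for all x ∈ H, then the range of A is contained in the range of B. -/

import Mathlib

theorem douglas_norm_ineq_implies_range_subset
    {H : Type*} [NormedAddCommGroup H] [InnerProductSpace ℂ H] [CompleteSpace H]
    (A B : H →L[ℂ] H)
    (h : ∃ c : ℝ, 0 < c ∧ ∀ x : H,
      ‖(ContinuousLinearMap.adjoint A) x‖ ≤ c * ‖(ContinuousLinearMap.adjoint B) x‖) :
    LinearMap.range (A : H →ₗ[ℂ] H) ≤ LinearMap.range (B : H →ₗ[ℂ] H) := by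
  obtain ⟨c, hc, hineq⟩ := h
  rintro y ⟨u, rfl⟩
  set g := ContinuousLinearMap.adjoint B with hg
  set y : H := A u with hy
  -- key bound
  have key : ∀ x : H, ‖(inner ℂ y x : ℂ)‖ ≤ (c * ‖u‖) * ‖g x‖ := by
    intro x
    have h1 : (inner ℂ y x : ℂ) = inner ℂ u ((ContinuousLinearMap.adjoint A) x) := by
      rw [hy]; exact (ContinuousLinearMap.adjoint_inner_right A u x).symm
    calc ‖(inner ℂ y x : ℂ)‖ = ‖(inner ℂ u ((ContinuousLinearMap.adjoint A) x) : ℂ)‖ := by rw [h1]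
      _ ≤ ‖u‖ * ‖(ContinuousLinearMap.adjoint A) x‖ := norm_inner_le_norm _ _
      _ ≤ ‖u‖ * (c * ‖g x‖) := by
          exact mul_le_mul_of_nonneg_left (hineq x) (norm_nonneg u)
      _ = (c * ‖u‖) * ‖g x‖ := by ring
  -- f : the functional x ↦ ⟪y, x⟫
  set f : H →ₗ[ℂ] ℂ := (innerSL ℂ y).toLinearMap with hf
  have hker : LinearMap.ker (g : H →ₗ[ℂ] H) ≤ LinearMap.ker f := by
    intro x hx
    have hx' : g x = 0 := hx
    have := key x
    rw [hx', norm_zero, mul_zero] at this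
    have : ‖(inner ℂ y x : ℂ)‖ = 0 := le_antisymm this (norm_nonneg _)
    simpa [hf] using norm_eq_zero.mp this
  -- φ : functional on range g
  set e := LinearMap.quotKerEquivRange (g : H →ₗ[ℂ] H) with he
  set φ : LinearMap.range (g : H →ₗ[ℂ] H) →ₗ[ℂ] ℂ :=
    ((LinearMap.ker (g : H →ₗ[ℂ] H)).liftQ f hker).comp e.symm.toLinearMap with hφ
  have hφ_apply : ∀ (x : H) (hx : (g : H →ₗ[ℂ] H) x ∈ LinearMap.range (g : H →ₗ[ℂ] H)),
      φ ⟨(g : H →ₗ[ℂ] H) x, hx⟩ = inner ℂ y x := by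
    intro x hx
    have h1 : (⟨(g : H →ₗ[ℂ] H) x, hx⟩ : LinearMap.range (g : H →ₗ[ℂ] H))
        = e (Submodule.Quotient.mk x) := by
      apply Subtype.ext
      simp [he, LinearMap.quotKerEquivRange]
    rw [hφ, LinearMap.comp_apply, LinearEquiv.coe_coe, h1, LinearEquiv.symm_apply_apply,
      Submodule.liftQ_apply]
    simp [hf]
  have hφ_bound : ∀ w : LinearMap.range (g : H →ₗ[ℂ] H), ‖φ w‖ ≤ (c * ‖u‖) * ‖(w : H)‖ := by
    rintro ⟨w, x, rfl⟩
    exact (congrArg norm (hφ_apply x (LinearMap.mem_range_self _ x))).trans_le (key x)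
  set φc : LinearMap.range (g : H →ₗ[ℂ] H) →L[ℂ] ℂ :=
    φ.mkContinuous (c * ‖u‖) hφ_bound with hφc
  obtain ⟨G, hGext, _⟩ := exists_extension_norm_eq
    (LinearMap.range (g : H →ₗ[ℂ] H)) φc
  set z := (InnerProductSpace.toDual ℂ H).symm G with hz
  have hzv : ∀ v : H, (inner ℂ z v : ℂ) = G v := by
    intro v
    rw [hz, ← InnerProductSpace.toDual_apply_apply, LinearIsometryEquiv.apply_symm_apply]
  refine ⟨z, ?_⟩
  apply ext_inner_right ℂ
  intro x
  have : (inner ℂ (B z) x : ℂ) = inner ℂ z (g x) := by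
    rw [hg, ContinuousLinearMap.adjoint_inner_right]
  change (inner ℂ (B z) x : ℂ) = _
  rw [this, hzv, show (g x : H) = (⟨g x, LinearMap.mem_range_self _ x⟩ :
      LinearMap.range (g : H →ₗ[ℂ] H)) from rfl, hGext, hφc]
  exact hφ_apply x _
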